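/- For a filtration I of a Noetherian ring R, the Rees algebra R[K(I)] = ⊕_m K(I)_m t^m of the filtration K(I) is integrally closed in the polynomial ring R[t]. -/

import Mathlib

open Filter Topology Polynomial
open scoped ENNReal

/-- A filtration `I = {I_m}` of ideals of `R`: `I_0 = R`, `I_{n+1} ⊆ I_n`,
and `I_m · I_n ⊆ I_{m+n}`. -/
structure RingFiltration (R : Type*) [CommRing R] where
  I : ℕ → Ideal R
  top_eq : I 0 = ⊤
  antitone_succ : ∀ n, I (n + 1) ≤ I n
  mul_le : ∀ m n, I m * I n ≤ I (m + n)

namespace RingFiltration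
variable {R : Type*} [CommRing R] (F : RingFiltration R)

/-- The order function `ν_I(f) = sup {m : f ∈ I_m}`, viewed in `[0,∞]`. -/
noncomputable def nu (f : R) : ℝ≥0∞ :=
  sSup ((fun m : ℕ => (m : ℝ≥0∞)) '' {m | f ∈ F.I m})

/-- The asymptotic Samuel function `ν̄_I(f) = lim_n ν_I(f^n)/n` (the limit exists and
equals the limsup used here to define it). -/
noncomputable def nubar (f : R) : ℝ≥0∞ :=
  Filter.limsup (fun n : ℕ => F.nu (f ^ n) / (n : ℝ≥0∞)) Filter.atTop

end RingFiltration

/-- The Rees algebra `Σ_m F_m t^m ⊆ R[t]` of a filtration, realized as the subalgebra of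
polynomials whose `m`-th coefficient lies in `F_m`. -/
def RingFiltration.reesAlgebra {R : Type*} [CommRing R] (F : RingFiltration R) :
    Subalgebra R (Polynomial R) where
  carrier := {p | ∀ m, p.coeff m ∈ F.I m}
  add_mem' := fun hp hq m => by
    simpa [Polynomial.coeff_add] using (F.I m).add_mem (hp m) (hq m)
  mul_mem' := by
    intro p q hp hq m
    rw [Polynomial.coeff_mul]
    refine Ideal.sum_mem _ fun x hx => ?_
    have h : x.1 + x.2 = m := Finset.HasAntidiagonal.mem_antidiagonal.mp hx
    exact h ▸ F.mul_le x.1 x.2 (Ideal.mul_mem_mul (hp x.1) (hq x.2))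
  algebraMap_mem' := by
    intro r m
    rw [Polynomial.algebraMap_eq, Polynomial.coeff_C]
    split
    · next h => subst h; rw [F.top_eq]; trivial
    · exact (F.I m).zero_mem


section AuxiliaryLemmas

private lemma limsup_comp_le' {g : ℕ → ℝ≥0∞} {φ : ℕ → ℕ} (hφ : Filter.Tendsto φ atTop atTop) :
    Filter.limsup (fun k => g (φ k)) atTop ≤ Filter.limsup g atTop := by
  rw [Filter.limsup_eq, Filter.limsup_eq]
  exact sInf_le_sInf fun a ha => hφ.eventually ha

private lemma nubar_pow_le' {R : Type*} [CommRing R] (F : RingFiltration R) (f : R) {N : ℕ}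
    (hN : N ≠ 0) : F.nubar (f ^ N) ≤ N * F.nubar f := by
  have hdiv : ∀ k : ℕ, F.nu ((f ^ N) ^ k) / k
      = (N : ℝ≥0∞) * (F.nu (f ^ (N * k)) / ((N * k : ℕ) : ℝ≥0∞)) := by
    intro k
    rw [← pow_mul, Nat.cast_mul, ← mul_div_assoc,
      ENNReal.mul_div_mul_left _ _ (by exact_mod_cast hN) (ENNReal.natCast_ne_top N)]
  calc F.nubar (f ^ N)
      = Filter.limsup (fun k : ℕ => (N : ℝ≥0∞) * (F.nu (f ^ (N * k)) / ((N * k : ℕ) : ℝ≥0∞)))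
        atTop := by
        unfold RingFiltration.nubar
        exact Filter.limsup_congr (Filter.Eventually.of_forall hdiv)
    _ = (N : ℝ≥0∞) * Filter.limsup (fun k : ℕ => F.nu (f ^ (N * k)) / ((N * k : ℕ) : ℝ≥0∞))
        atTop := ENNReal.limsup_const_mul_of_ne_top (ENNReal.natCast_ne_top N)
    _ ≤ (N : ℝ≥0∞) * Filter.limsup (fun j : ℕ => F.nu (f ^ j) / (j : ℝ≥0∞)) atTop := by
        refine mul_le_mul_right (limsup_comp_le' (g := fun j => F.nu (f ^ j) / (j : ℝ≥0∞)) ?_) _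
        exact Filter.tendsto_atTop_mono (fun k => Nat.le_mul_of_pos_left k (Nat.pos_of_ne_zero hN))
          Filter.tendsto_id
    _ = (N : ℝ≥0∞) * F.nubar f := rfl

private lemma mem_reesAlgebra_iff' {R : Type*} [CommRing R] {K : RingFiltration R}
    {p : Polynomial R} : p ∈ K.reesAlgebra ↔ ∀ m, p.coeff m ∈ K.I m := Iff.rfl

/-- Every power `p ^ N` of an integral element is an `A`-combination of `p ^ i`, `i < n`. -/
private lemma pow_rep' {R : Type*} [CommRing R] {A : Subalgebra R (Polynomial R)}
    {p : Polynomial R} {n : ℕ} (hn : 0 < n) {c : ℕ → Polynomial R} (hc : ∀ i, c i ∈ A)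
    (hpn : p ^ n = ∑ i ∈ Finset.range n, c i * p ^ i) (N : ℕ) :
    ∃ b : Fin n → Polynomial R, (∀ i, b i ∈ A) ∧ p ^ N = ∑ i, b i * p ^ (i : ℕ) := by
  set M : Submodule (↥A) (Polynomial R) :=
    Submodule.span (↥A) (Set.range fun i : Fin n => p ^ (i : ℕ)) with hM
  have hsmul : ∀ (a : ↥A) (x : Polynomial R), a • x = (a : Polynomial R) * x := fun a x =>
    Algebra.smul_def a x
  have hgen : ∀ i : ℕ, i < n → p ^ i ∈ M := fun i hi =>
    Submodule.subset_span ⟨⟨i, hi⟩, rfl⟩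
  have hpnM : p ^ n ∈ M := by
    rw [hpn]
    refine Submodule.sum_mem _ fun i hi => ?_
    have : c i * p ^ i = (⟨c i, hc i⟩ : ↥A) • p ^ i := by rw [hsmul]
    rw [this]
    exact Submodule.smul_mem _ _ (hgen i (Finset.mem_range.mp hi))
  have hmulp : ∀ x ∈ M, p * x ∈ M := by
    intro x hx
    refine Submodule.span_induction ?_ ?_ ?_ ?_ hx
    · rintro y ⟨i, rfl⟩
      rcases Nat.lt_or_ge ((i : ℕ) + 1) n with h | h
      · rw [← pow_succ']
        exact hgen _ h
      · have hi : (i : ℕ) + 1 = n := le_antisymm i.isLt h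
        rw [← pow_succ', hi]
        exact hpnM
    · simpa using Submodule.zero_mem M
    · intro y z _ _ hy hz
      rw [mul_add]; exact Submodule.add_mem _ hy hz
    · intro a y _ hy
      rw [hsmul, ← mul_assoc, mul_comm p (a : Polynomial R), mul_assoc, ← hsmul]
      exact Submodule.smul_mem _ _ hy
  have hNmem : ∀ N : ℕ, p ^ N ∈ M := by
    intro N
    induction N with
    | zero => simpa using hgen 0 hn
    | succ N ih => rw [pow_succ, mul_comm]; exact hmulp _ ih
  obtain ⟨b, hb⟩ := (Submodule.mem_span_range_iff_exists_fun (↥A)).mp (hNmem N)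
  exact ⟨fun i => (b i : Polynomial R), fun i => (b i).2, by
    rw [← hb]; exact (Finset.sum_congr rfl fun i _ => hsmul _ _).symm ▸ rfl⟩

/-- Key estimate: the leading coefficient of an integral element has `ν̄ ≥ natDegree`. -/
private lemma key' {R : Type*} [CommRing R] [Nontrivial R] (F K : RingFiltration R)
    (hK : ∀ m : ℕ, ∀ f : R, f ∈ K.I m ↔ (m : ℝ≥0∞) ≤ F.nubar f)
    (p : Polynomial R) (hp : IsIntegral (↥K.reesAlgebra) p) :
    ((p.natDegree : ℕ) : ℝ≥0∞) ≤ F.nubar p.leadingCoeff := by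
  set d := p.natDegree with hd
  by_cases hd0 : d = 0
  · simp [hd0]
  have hanti : ∀ {a b : ℕ}, a ≤ b → K.I b ≤ K.I a :=
    fun {a b} h => antitone_nat_of_succ_le K.antitone_succ h
  obtain ⟨q, hqm, hq0⟩ := hp
  rw [Polynomial.eval₂_eq_sum_range, Finset.sum_range_succ, hqm.coeff_natDegree, map_one,
    one_mul] at hq0
  obtain ⟨m, hm⟩ : ∃ m, q.natDegree = m + 1 := by
    rcases Nat.eq_zero_or_pos q.natDegree with h | h
    · exfalso
      rw [h] at hq0
      simp at hq0
    · exact ⟨q.natDegree - 1, (Nat.succ_pred_eq_of_pos h).symm⟩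
  set n := q.natDegree with hn
  have hn1 : 0 < n := by omega
  have heq : p ^ n = ∑ i ∈ Finset.range n,
      (-(algebraMap (↥K.reesAlgebra) (Polynomial R) (q.coeff i))) * p ^ i := by
    have := eq_neg_of_add_eq_zero_right hq0
    rw [this, ← Finset.sum_neg_distrib]
    exact Finset.sum_congr rfl fun i _ => by ring
  have hcmem : ∀ i : ℕ, (-(algebraMap (↥K.reesAlgebra) (Polynomial R) (q.coeff i)))
      ∈ K.reesAlgebra := fun i => neg_mem (q.coeff i).2
  -- coefficient estimate
  have hcoef : ∀ N' : ℕ, p.leadingCoeff ^ (n + N') ∈ K.I (d * (N' + 1)) := by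
    intro N'
    obtain ⟨b, hb, hs⟩ := pow_rep' hn1 hcmem heq (n + N')
    rw [← Polynomial.coeff_pow_mul_natDegree, hs, Polynomial.finset_sum_coeff]
    refine Ideal.sum_mem _ fun i _ => ?_
    rw [Polynomial.coeff_mul]
    refine Ideal.sum_mem _ fun x hx => ?_
    by_cases h0 : (p ^ (i : ℕ)).coeff x.2 = 0
    · rw [h0, mul_zero]; exact Ideal.zero_mem _
    · have hx2 : x.2 ≤ m * d := by
        refine le_trans (Polynomial.le_natDegree_of_ne_zero h0)
          (le_trans Polynomial.natDegree_pow_le ?_)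
        exact Nat.mul_le_mul_right _ (by have := i.isLt; omega)
      have hsum : x.1 + x.2 = (n + N') * d := Finset.HasAntidiagonal.mem_antidiagonal.mp hx
      have hx1 : d * (N' + 1) ≤ x.1 := by
        have hkey : d * (N' + 1) + m * d = (n + N') * d := by rw [hm]; ring
        have : d * (N' + 1) + x.2 ≤ x.1 + x.2 := by
          rw [hsum, ← hkey]
          exact Nat.add_le_add_left hx2 _
        omega
      exact Ideal.mul_mem_right _ _ (hanti hx1 (hb i x.1))
  -- transfer to nubar inequalities
  have hineq : ∀ N' : ℕ, ((d * (N' + 1) : ℕ) : ℝ≥0∞)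
      ≤ ((n + N' : ℕ) : ℝ≥0∞) * F.nubar p.leadingCoeff := fun N' =>
    le_trans ((hK _ _).mp (hcoef N')) (nubar_pow_le' F _ (by omega))
  -- Archimedean conclusion
  by_contra hlt
  push_neg at hlt
  have hvt : F.nubar p.leadingCoeff ≠ ⊤ := ne_top_of_lt hlt
  set v := (F.nubar p.leadingCoeff).toReal with hv
  have hvd : v < d := by
    have := (ENNReal.toReal_lt_toReal hvt (ENNReal.natCast_ne_top d)).mpr hlt
    simpa using this
  have hv0 : 0 ≤ v := ENNReal.toReal_nonneg
  have hreal : ∀ N' : ℕ, (d : ℝ) * (N' + 1) ≤ (n + N') * v := by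
    intro N'
    have h := hineq N'
    have hfin : ((n + N' : ℕ) : ℝ≥0∞) * F.nubar p.leadingCoeff ≠ ⊤ :=
      ENNReal.mul_ne_top (ENNReal.natCast_ne_top _) hvt
    have := ENNReal.toReal_mono hfin h
    rw [ENNReal.toReal_mul, ENNReal.toReal_natCast, ENNReal.toReal_natCast] at this
    simpa using this
  have hd1 : (1 : ℝ) ≤ d := by exact_mod_cast Nat.one_le_iff_ne_zero.mpr hd0
  obtain ⟨N', hN'⟩ := exists_nat_gt ((n * v) / (d - v))
  have h1 : (n : ℝ) * v < N' * (d - v) := by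
    rw [div_lt_iff₀ (by linarith)] at hN'
    linarith
  have h2 := hreal N'
  nlinarith

end AuxiliaryLemmas

/-- For a filtration `I` of a Noetherian ring `R`, the Rees algebra of the saturation
`K(I)` (where `K(I)_m = {f : ν̄_I(f) ≥ m}`) is integrally closed in `R[t]`. -/
theorem reesAlgebra_saturation_integrallyClosed {R : Type*} [CommRing R]
    [IsNoetherianRing R] (F K : RingFiltration R)
    (hK : ∀ m : ℕ, ∀ f : R, f ∈ K.I m ↔ (m : ℝ≥0∞) ≤ F.nubar f)
    (p : Polynomial R) (hp : IsIntegral (↥K.reesAlgebra) p) :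
    p ∈ K.reesAlgebra := by
  rcases subsingleton_or_nontrivial R with hS | hS
  · rw [mem_reesAlgebra_iff']
    intro m
    rw [Subsingleton.elim (p.coeff m) 0]
    exact (K.I m).zero_mem
  suffices h : ∀ D (p : Polynomial R), IsIntegral (↥K.reesAlgebra) p → p.natDegree ≤ D →
      p ∈ K.reesAlgebra from h p.natDegree p hp le_rfl
  intro D
  induction D with
  | zero =>
    intro p hp hdeg
    rw [mem_reesAlgebra_iff']
    intro m
    match m with
    | 0 => rw [K.top_eq]; trivial
    | m + 1 =>
      rw [Polynomial.coeff_eq_zero_of_natDegree_lt (by omega)]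
      exact (K.I _).zero_mem
  | succ D ih =>
    intro p hp hdeg
    by_cases hle : p.natDegree ≤ D
    · exact ih p hp hle
    · have hdeq : p.natDegree = D + 1 := by omega
      have hlead : p.leadingCoeff ∈ K.I p.natDegree := (hK _ _).mpr (key' F K hK p hp)
      have hmono : (Polynomial.monomial p.natDegree p.leadingCoeff) ∈ K.reesAlgebra := by
        rw [mem_reesAlgebra_iff']
        intro m
        rw [Polynomial.coeff_monomial]
        split
        · next h => exact h ▸ hlead
        · exact (K.I m).zero_mem
      have hq : IsIntegral (↥K.reesAlgebra)
          (p - Polynomial.monomial p.natDegree p.leadingCoeff) := by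
        refine hp.sub ?_
        have : Polynomial.monomial p.natDegree p.leadingCoeff
            = algebraMap (↥K.reesAlgebra) (Polynomial R) ⟨_, hmono⟩ := rfl
        rw [this]
        exact isIntegral_algebraMap
      have hdq : (p - Polynomial.monomial p.natDegree p.leadingCoeff).natDegree ≤ D := by
        rw [Polynomial.self_sub_monomial_natDegree_leadingCoeff]
        have := Polynomial.eraseLead_natDegree_le p
        omega
      have hmem := ih _ hq hdq
      have : p = (p - Polynomial.monomial p.natDegree p.leadingCoeff)
          + Polynomial.monomial p.natDegree p.leadingCoeff := by ring
      rw [this]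
      exact add_mem hmem hmono
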